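/- For every n ≥ 1 and every integer m with 0 ≤ m ≤ 2^{n−1}, there exists a minimum-width m-partition of the symbol nodes of the n-polar decoding graph P_n in which every bowtie is either a split bowtie or a contained bowtie (i.e., no bowtie is a crossing bowtie). -/

import Mathlib

/-- Vertex type of the polar decoding graph `P_{k+1}`.  `PV 0` is the vertex type of
`P_1` (two symbol nodes and two right-hand nodes), and the vertices of `P_{k+2}` are
`2^(k+2)` new symbol nodes together with two disjoint copies of the vertices of
`P_{k+1}`. -/
def PV : ℕ → Type
  | 0 => Fin 2 ⊕ Fin 2
  | k + 1 => Fin (2 ^ (k + 2)) ⊕ (PV k ⊕ PV k)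

/-- The `i`-th symbol node of `P_{k+1}` (there are `2^(k+1)` of them). -/
def sym : (k : ℕ) → Fin (2 ^ (k + 1)) → PV k
  | 0, i => Sum.inl i
  | _ + 1, i => Sum.inl i

/-- The polar decoding graph `P_{k+1}` on vertex type `PV k`.  `P_1` is the complete
bipartite graph `K_{2,2}` whose two left vertices are its symbol nodes.  `P_{k+2}`
consists of `2^(k+2)` symbol nodes together with two copies of `P_{k+1}`; the symbol
nodes `a_{2i}` and `a_{2i+1}` (0-indexed) are joined to the `i`-th symbol node of each
copy, giving the `i`-th bowtie. -/
def PG : (k : ℕ) → SimpleGraph (PV k)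
  | 0 => SimpleGraph.fromRel (fun u v => u.isLeft ∧ v.isRight)
  | k + 1 =>
    SimpleGraph.fromRel (fun u v =>
      match u, v with
      | Sum.inl j, Sum.inr w =>
          ∃ i : Fin (2 ^ (k + 1)), (j : ℕ) / 2 = (i : ℕ) ∧
            (w = Sum.inl (sym k i) ∨ w = Sum.inr (sym k i))
      | Sum.inr (Sum.inl a), Sum.inr (Sum.inl b) => (PG k).Adj a b
      | Sum.inr (Sum.inr a), Sum.inr (Sum.inr b) => (PG k).Adj a b
      | _, _ => False)

/-- The width of the partition `(A, Aᶜ)` of the vertices of `G`: the number of edges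
of `G` with one endpoint in `A` and the other outside `A`. -/
noncomputable def partWidth {V : Type} (G : SimpleGraph V) (A : Set V) : ℕ :=
  {p : V × V | p.1 ∈ A ∧ p.2 ∉ A ∧ G.Adj p.1 p.2}.ncard


/-- The first symbol node `a_{2i-1}` (0-indexed: `a_{2i}`) of the `i`-th bowtie of `P_{k+1}`. -/
def bowtieA1 (k : ℕ) (i : Fin (2 ^ k)) : PV k :=
  sym k ⟨2 * i, by have := i.isLt; rw [pow_succ]; omega⟩

/-- The second symbol node `a_{2i}` (0-indexed: `a_{2i+1}`) of the `i`-th bowtie of `P_{k+1}`. -/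
def bowtieA2 (k : ℕ) (i : Fin (2 ^ k)) : PV k :=
  sym k ⟨2 * i + 1, by have := i.isLt; rw [pow_succ]; omega⟩

/-- The node `b_i` of the `i`-th bowtie: the `i`-th symbol node of the first copy of
`P_k` inside `P_{k+1}` (for `P_1`, the first right-hand vertex of `K_{2,2}`). -/
def bowtieB : (k : ℕ) → Fin (2 ^ k) → PV k
  | 0, _ => Sum.inr 0
  | k + 1, i => Sum.inr (Sum.inl (sym k i))

/-- The node `c_i` of the `i`-th bowtie: the `i`-th symbol node of the second copy of
`P_k` inside `P_{k+1}` (for `P_1`, the second right-hand vertex of `K_{2,2}`). -/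
def bowtieC : (k : ℕ) → Fin (2 ^ k) → PV k
  | 0, _ => Sum.inr 1
  | k + 1, i => Sum.inr (Sum.inr (sym k i))

/-- Relative to the partition `(A, Aᶜ)`, the `i`-th bowtie is *split* if its two symbol
nodes lie on opposite sides of the partition. -/
def SplitBowtie (k : ℕ) (i : Fin (2 ^ k)) (A : Set (PV k)) : Prop :=
  (bowtieA1 k i ∈ A ∧ bowtieA2 k i ∉ A) ∨ (bowtieA1 k i ∉ A ∧ bowtieA2 k i ∈ A)

/-- Relative to the partition `(A, Aᶜ)`, the `i`-th bowtie is *contained* if all four of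
its vertices lie on the same side of the partition. -/
def ContainedBowtie (k : ℕ) (i : Fin (2 ^ k)) (A : Set (PV k)) : Prop :=
  (bowtieA1 k i ∈ A ∧ bowtieA2 k i ∈ A ∧ bowtieB k i ∈ A ∧ bowtieC k i ∈ A) ∨
    (bowtieA1 k i ∉ A ∧ bowtieA2 k i ∉ A ∧ bowtieB k i ∉ A ∧ bowtieC k i ∉ A)

def pvFinite : (k : ℕ) → Finite (PV k)
  | 0 => by unfold PV; exact inferInstance
  | k + 1 => by have := pvFinite k; unfold PV; exact inferInstance

instance (k : ℕ) : Finite (PV k) := pvFinite k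

lemma sym_injective (k : ℕ) : Function.Injective (sym k) := by
  cases k with
  | zero => exact fun a b h => by unfold sym at h; exact Sum.inl_injective h
  | succ k => exact fun a b h => by unfold sym at h; exact Sum.inl_injective h

lemma sym_ne_bowtieB (k : ℕ) (j : Fin (2 ^ (k + 1))) (i : Fin (2 ^ k)) :
    sym k j ≠ bowtieB k i := by
  cases k <;> simp [sym, bowtieB] <;> intro h <;> cases h

lemma sym_ne_bowtieC (k : ℕ) (j : Fin (2 ^ (k + 1))) (i : Fin (2 ^ k)) :
    sym k j ≠ bowtieC k i := by
  cases k <;> simp [sym, bowtieC] <;> intro h <;> cases h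

def half {k : ℕ} (j : Fin (2 ^ (k + 1))) : Fin (2 ^ k) :=
  ⟨(j : ℕ) / 2, by have h := j.isLt; have h2 : 2 ^ (k + 1) = 2 ^ k * 2 := pow_succ 2 k; omega⟩

lemma adj_sym (k : ℕ) (j : Fin (2 ^ (k + 1))) (w : PV k) :
    (PG k).Adj (sym k j) w ↔ w = bowtieB k (half j) ∨ w = bowtieC k (half j) := by
  cases k with
  | zero =>
    show (SimpleGraph.fromRel _).Adj _ _ ↔ _
    rw [SimpleGraph.fromRel_adj]
    constructor
    · rintro ⟨hne, h | h⟩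
      · rcases w with wl | wr
        · simp [sym] at h
        · match wr with
          | 0 => left; rfl
          | 1 => right; rfl
      · simp [sym] at h
    · rintro (rfl | rfl) <;> simp [sym, bowtieB, bowtieC, SimpleGraph.fromRel_adj] <;> intro h <;> cases h
  | succ k =>
    show (SimpleGraph.fromRel _).Adj _ _ ↔ _
    rw [SimpleGraph.fromRel_adj]
    constructor
    · rintro ⟨hne, h | h⟩
      · rcases w with wl | wr
        · exact absurd h (by simp [sym])
        · simp only [sym] at h
          obtain ⟨i, hi, hw⟩ := h
          have : i = half j := by
            apply Fin.ext; exact hi.symm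
          subst this
          rcases hw with rfl | rfl
          · left; rfl
          · right; rfl
      · rcases w with wl | wr
        · exact absurd h (by simp [sym])
        · exact absurd h (by rcases wr with a | a <;> simp [sym])
    · rintro (rfl | rfl)
      · refine ⟨(by simp [sym, bowtieB]; intro h; cases h), Or.inl ?_⟩
        exact ⟨half j, rfl, Or.inl rfl⟩
      · refine ⟨(by simp [sym, bowtieC]; intro h; cases h), Or.inl ?_⟩
        exact ⟨half j, rfl, Or.inr rfl⟩

lemma bowtieA1_eq (k : ℕ) (i : Fin (2 ^ k)) :
    bowtieA1 k i = sym k ⟨2 * i, by have := i.isLt; rw [pow_succ]; omega⟩ := rfl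

lemma half_A1 (k : ℕ) (i : Fin (2 ^ k)) :
    half (⟨2 * i, by have := i.isLt; rw [pow_succ]; omega⟩ : Fin (2 ^ (k + 1))) = i := by
  apply Fin.ext; show 2 * (i : ℕ) / 2 = i; omega

lemma half_A2 (k : ℕ) (i : Fin (2 ^ k)) :
    half (⟨2 * i + 1, by have := i.isLt; rw [pow_succ]; omega⟩ : Fin (2 ^ (k + 1))) = i := by
  apply Fin.ext; show (2 * (i : ℕ) + 1) / 2 = i; omega

lemma adj_A1B (k : ℕ) (i : Fin (2 ^ k)) : (PG k).Adj (bowtieA1 k i) (bowtieB k i) := by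
  rw [bowtieA1_eq, adj_sym]; left; rw [half_A1]

lemma adj_A1C (k : ℕ) (i : Fin (2 ^ k)) : (PG k).Adj (bowtieA1 k i) (bowtieC k i) := by
  rw [bowtieA1_eq, adj_sym]; right; rw [half_A1]

lemma adj_A2B (k : ℕ) (i : Fin (2 ^ k)) : (PG k).Adj (bowtieA2 k i) (bowtieB k i) := by
  show (PG k).Adj (sym k _) _
  rw [adj_sym]; left; rw [half_A2]

lemma adj_A2C (k : ℕ) (i : Fin (2 ^ k)) : (PG k).Adj (bowtieA2 k i) (bowtieC k i) := by
  show (PG k).Adj (sym k _) _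
  rw [adj_sym]; right; rw [half_A2]

lemma A1_ne_A2 (k : ℕ) (i : Fin (2 ^ k)) : bowtieA1 k i ≠ bowtieA2 k i := by
  intro h
  have := sym_injective k h
  have : (2 * (i : ℕ)) = 2 * i + 1 := congrArg Fin.val this
  omega

lemma B_ne_C (k : ℕ) (i j : Fin (2 ^ k)) : bowtieB k i ≠ bowtieC k j := by
  cases k with
  | zero => intro h; injection h with h; exact absurd h (by decide)
  | succ k => intro h; injection h with h; cases h

lemma B_inj (k : ℕ) {i j : Fin (2 ^ k)} (h : bowtieB k i = bowtieB k j) : i = j := by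
  cases k with
  | zero => omega
  | succ k =>
    simp only [bowtieB] at h
    exact sym_injective k (by injection h with h; injection h)

lemma C_inj (k : ℕ) {i j : Fin (2 ^ k)} (h : bowtieC k i = bowtieC k j) : i = j := by
  cases k with
  | zero => omega
  | succ k =>
    simp only [bowtieC] at h
    exact sym_injective k (by injection h with h; injection h)

lemma nbr_bowtieB (k : ℕ) (i : Fin (2 ^ k)) :
    ∃ x y : PV k, ∀ w, (PG k).Adj (bowtieB k i) w →
      w = bowtieA1 k i ∨ w = bowtieA2 k i ∨ w = x ∨ w = y := by
  cases k with
  | zero =>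
    refine ⟨bowtieA1 0 i, bowtieA1 0 i, fun w hw => ?_⟩
    have h0 : (i : ℕ) = 0 := by have := i.isLt; omega
    rw [show (PG 0) = SimpleGraph.fromRel (fun u v => u.isLeft ∧ v.isRight) from rfl,
      SimpleGraph.fromRel_adj] at hw
    obtain ⟨hne, h | h⟩ := hw
    · simp [bowtieB] at h
    · rcases w with wl | wr
      · match wl, h0 with
        | 0, h0 =>
          left; show Sum.inl 0 = sym 0 _
          unfold sym; exact congrArg Sum.inl (Fin.ext (by simp [h0]))
        | 1, h0 =>
          right; left; show Sum.inl 1 = sym 0 _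
          unfold sym; exact congrArg Sum.inl (Fin.ext (by simp [h0]))
      · simp [bowtieB] at h
  | succ k =>
    refine ⟨Sum.inr (Sum.inl (bowtieB k (half i))), Sum.inr (Sum.inl (bowtieC k (half i))),
      fun w hw => ?_⟩
    rw [show PG (k+1) = SimpleGraph.fromRel _ from rfl, SimpleGraph.fromRel_adj] at hw
    obtain ⟨hne, h | h⟩ := hw
    · rcases w with wl | wr
      · simp [bowtieB] at h
      · rcases wr with y | y
        · simp only [bowtieB] at h
          have : (PG k).Adj (sym k i) y := h
          rw [adj_sym] at this
          rcases this with rfl | rfl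
          · right; right; left; rfl
          · right; right; right; rfl
        · simp [bowtieB] at h
    · rcases w with wl | wr
      · simp only [bowtieB] at h
        obtain ⟨i', hi', hw⟩ := h
        rcases hw with heq | heq
        · have : sym k i' = sym k i := by injection heq with h2; exact h2.symm
          have hii : i' = i := sym_injective k this
          subst hii
          have : (wl : ℕ) = 2 * i' ∨ (wl : ℕ) = 2 * i' + 1 := by omega
          rcases this with h1 | h1
          · left; show Sum.inl wl = sym (k+1) _; simp [sym]; apply Fin.ext; simp [h1]
          · right; left; show Sum.inl wl = sym (k+1) _; simp [sym]; apply Fin.ext; simp [h1]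
        · exact absurd heq (by simp)
      · rcases wr with y | y
        · simp only [bowtieB] at h
          have : (PG k).Adj y (sym k i) := h
          rw [(PG k).adj_comm, adj_sym] at this
          rcases this with rfl | rfl
          · right; right; left; rfl
          · right; right; right; rfl
        · simp [bowtieB] at h

lemma nbr_bowtieC (k : ℕ) (i : Fin (2 ^ k)) :
    ∃ x y : PV k, ∀ w, (PG k).Adj (bowtieC k i) w →
      w = bowtieA1 k i ∨ w = bowtieA2 k i ∨ w = x ∨ w = y := by
  cases k with
  | zero =>
    refine ⟨bowtieA1 0 i, bowtieA1 0 i, fun w hw => ?_⟩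
    have h0 : (i : ℕ) = 0 := by have := i.isLt; omega
    rw [show (PG 0) = SimpleGraph.fromRel (fun u v => u.isLeft ∧ v.isRight) from rfl,
      SimpleGraph.fromRel_adj] at hw
    obtain ⟨hne, h | h⟩ := hw
    · simp [bowtieC] at h
    · rcases w with wl | wr
      · match wl, h0 with
        | 0, h0 =>
          left; show Sum.inl 0 = sym 0 _
          unfold sym; exact congrArg Sum.inl (Fin.ext (by simp [h0]))
        | 1, h0 =>
          right; left; show Sum.inl 1 = sym 0 _
          unfold sym; exact congrArg Sum.inl (Fin.ext (by simp [h0]))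
      · simp [bowtieC] at h
  | succ k =>
    refine ⟨Sum.inr (Sum.inr (bowtieB k (half i))), Sum.inr (Sum.inr (bowtieC k (half i))),
      fun w hw => ?_⟩
    rw [show PG (k+1) = SimpleGraph.fromRel _ from rfl, SimpleGraph.fromRel_adj] at hw
    obtain ⟨hne, h | h⟩ := hw
    · rcases w with wl | wr
      · simp [bowtieC] at h
      · rcases wr with y | y
        · simp [bowtieC] at h
        · simp only [bowtieC] at h
          have : (PG k).Adj (sym k i) y := h
          rw [adj_sym] at this
          rcases this with rfl | rfl
          · right; right; left; rfl
          · right; right; right; rfl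
    · rcases w with wl | wr
      · simp only [bowtieC] at h
        obtain ⟨i', hi', hw⟩ := h
        rcases hw with heq | heq
        · exact absurd heq (by simp)
        · have : sym k i' = sym k i := by injection heq with h2; exact h2.symm
          have hii : i' = i := sym_injective k this
          subst hii
          have : (wl : ℕ) = 2 * i' ∨ (wl : ℕ) = 2 * i' + 1 := by omega
          rcases this with h1 | h1
          · left; show Sum.inl wl = sym (k+1) _; simp [sym]; apply Fin.ext; simp [h1]
          · right; left; show Sum.inl wl = sym (k+1) _; simp [sym]; apply Fin.ext; simp [h1]
      · rcases wr with y | y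
        · simp [bowtieC] at h
        · simp only [bowtieC] at h
          have : (PG k).Adj y (sym k i) := h
          rw [(PG k).adj_comm, adj_sym] at this
          rcases this with rfl | rfl
          · right; right; left; rfl
          · right; right; right; rfl

section WidthMachinery

variable {V : Type} [Finite V]

/-- Neighbours of `v` lying on the opposite side of the partition. -/
def oppSet (G : SimpleGraph V) (A : Set V) (v : V) : Set V :=
  {u | G.Adj v u ∧ ¬(u ∈ A ↔ v ∈ A)}

lemma partWidth_decomp (G : SimpleGraph V) (A : Set V) (v : V) :
    partWidth G A =
      {p : V × V | (p.1 ∈ A ∧ p.2 ∉ A ∧ G.Adj p.1 p.2) ∧ p.1 ≠ v ∧ p.2 ≠ v}.ncard +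
      (oppSet G A v).ncard := by
  classical
  set S : Set (V × V) := {p | p.1 ∈ A ∧ p.2 ∉ A ∧ G.Adj p.1 p.2}
  set T : Set (V × V) := {p | (p.1 ∈ A ∧ p.2 ∉ A ∧ G.Adj p.1 p.2) ∧ p.1 ≠ v ∧ p.2 ≠ v}
  set U : Set (V × V) := {p | (p.1 ∈ A ∧ p.2 ∉ A ∧ G.Adj p.1 p.2) ∧ (p.1 = v ∨ p.2 = v)}
  have hSTU : S = T ∪ U := by
    ext p; simp only [S, T, U, Set.mem_setOf_eq, Set.mem_union]; tauto
  have hdisj : Disjoint T U := by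
    rw [Set.disjoint_left]
    rintro p ⟨_, h1, h2⟩ ⟨_, h3⟩; tauto
  have hcard : S.ncard = T.ncard + U.ncard := by
    rw [hSTU, Set.ncard_union_eq hdisj (Set.toFinite T) (Set.toFinite U)]
  have hU : U.ncard = (oppSet G A v).ncard := by
    by_cases hv : v ∈ A
    · have himg : U = (fun u => (v, u)) '' (oppSet G A v) := by
        ext ⟨p1, p2⟩
        simp only [U, Set.mem_setOf_eq, Set.mem_image, oppSet]
        constructor
        · rintro ⟨⟨h1, h2, h3⟩, rfl | rfl⟩
          · exact ⟨p2, ⟨h3, by tauto⟩, rfl⟩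
          · exact absurd hv h2
        · rintro ⟨u, ⟨hu1, hu2⟩, heq⟩
          obtain ⟨rfl, rfl⟩ := Prod.mk.injEq .. ▸ heq
          refine ⟨⟨hv, by tauto, hu1⟩, Or.inl rfl⟩
      rw [himg, Set.ncard_image_of_injective _ (fun a b h => by
        simpa using congrArg Prod.snd h)]
    · have himg : U = (fun u => (u, v)) '' (oppSet G A v) := by
        ext ⟨p1, p2⟩
        simp only [U, Set.mem_setOf_eq, Set.mem_image, oppSet]
        constructor
        · rintro ⟨⟨h1, h2, h3⟩, rfl | rfl⟩
          · exact absurd h1 hv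
          · exact ⟨p1, ⟨h3.symm, by tauto⟩, rfl⟩
        · rintro ⟨u, ⟨hu1, hu2⟩, heq⟩
          obtain ⟨rfl, rfl⟩ := Prod.mk.injEq .. ▸ heq
          refine ⟨⟨by tauto, hv, hu1.symm⟩, Or.inr rfl⟩
      rw [himg, Set.ncard_image_of_injective _ (fun a b h => by
        simpa using congrArg Prod.fst h)]
  rw [show partWidth G A = S.ncard from rfl, hcard, hU]

lemma oppSet_flip (G : SimpleGraph V) (A A' : Set V) (v : V)
    (hA' : ∀ u, u ≠ v → (u ∈ A' ↔ u ∈ A)) (hv : v ∈ A' ↔ v ∉ A) :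
    oppSet G A' v = {u | G.Adj v u} \ oppSet G A v := by
  ext u
  simp only [oppSet, Set.mem_setOf_eq, Set.mem_diff]
  constructor
  · rintro ⟨hadj, hop⟩
    have hne : u ≠ v := fun h => G.irrefl (h ▸ hadj)
    have := hA' u hne
    refine ⟨hadj, fun ⟨_, hop'⟩ => ?_⟩
    tauto
  · rintro ⟨hadj, hmem⟩
    have hne : u ≠ v := fun h => G.irrefl (h ▸ hadj)
    have := hA' u hne
    refine ⟨hadj, fun hop' => hmem ⟨hadj, ?_⟩⟩
    tauto

lemma partWidth_flip_le (G : SimpleGraph V) (A A' : Set V) (v : V)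
    (hA' : ∀ u, u ≠ v → (u ∈ A' ↔ u ∈ A)) (hv : v ∈ A' ↔ v ∉ A)
    (hopp : (oppSet G A' v).ncard ≤ (oppSet G A v).ncard) :
    partWidth G A' ≤ partWidth G A := by
  rw [partWidth_decomp G A v, partWidth_decomp G A' v]
  have hT : {p : V × V | (p.1 ∈ A' ∧ p.2 ∉ A' ∧ G.Adj p.1 p.2) ∧ p.1 ≠ v ∧ p.2 ≠ v} =
      {p : V × V | (p.1 ∈ A ∧ p.2 ∉ A ∧ G.Adj p.1 p.2) ∧ p.1 ≠ v ∧ p.2 ≠ v} := by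
    ext ⟨p1, p2⟩
    simp only [Set.mem_setOf_eq]
    constructor
    · rintro ⟨⟨h1, h2, h3⟩, hn1, hn2⟩
      exact ⟨⟨(hA' p1 hn1).mp h1, fun h => h2 ((hA' p2 hn2).mpr h), h3⟩, hn1, hn2⟩
    · rintro ⟨⟨h1, h2, h3⟩, hn1, hn2⟩
      exact ⟨⟨(hA' p1 hn1).mpr h1, fun h => h2 ((hA' p2 hn2).mp h), h3⟩, hn1, hn2⟩
  rw [hT]
  omega

end WidthMachinery

/-- `Wrong k A i s` says that the two symbol nodes of bowtie `i` are on the same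
side of the partition, but the node `b_i` (if `s = false`) resp. `c_i` (if `s = true`)
is on the other side. -/
def Wrong (k : ℕ) (A : Set (PV k)) (i : Fin (2 ^ k)) (s : Bool) : Prop :=
  (bowtieA1 k i ∈ A ↔ bowtieA2 k i ∈ A) ∧
  ¬((cond s (bowtieC k i) (bowtieB k i)) ∈ A ↔ bowtieA1 k i ∈ A)

noncomputable def mu (k : ℕ) (A : Set (PV k)) : ℕ :=
  {p : Fin (2 ^ k) × Bool | Wrong k A p.1 p.2}.ncard

lemma sym_ne_node (k : ℕ) (j : Fin (2 ^ (k + 1))) (i : Fin (2 ^ k)) (s : Bool) :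
    sym k j ≠ cond s (bowtieC k i) (bowtieB k i) := by
  cases s
  · exact sym_ne_bowtieB k j i
  · exact sym_ne_bowtieC k j i

lemma node_ne_node (k : ℕ) {i j : Fin (2 ^ k)} {s t : Bool} (h : j ≠ i ∨ t ≠ s) :
    cond t (bowtieC k j) (bowtieB k j) ≠ cond s (bowtieC k i) (bowtieB k i) := by
  cases s <;> cases t <;> simp only [cond]
  · intro he
    rcases h with h | h
    · exact h (B_inj k he)
    · exact h rfl
  · exact fun he => (B_ne_C k i j) he.symm
  · exact B_ne_C k j i
  · intro he
    rcases h with h | h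
    · exact h (C_inj k he)
    · exact h rfl

set_option maxHeartbeats 1000000 in
lemma flip_improve (k : ℕ) (A : Set (PV k)) (i : Fin (2 ^ k)) (s : Bool)
    (hw : Wrong k A i s) :
    ∃ A' : Set (PV k), (A' ∩ Set.range (sym k)) = (A ∩ Set.range (sym k)) ∧
      partWidth (PG k) A' ≤ partWidth (PG k) A ∧ mu k A' < mu k A := by
  classical
  set v : PV k := cond s (bowtieC k i) (bowtieB k i) with hvdef
  have hex : ∃ A' : Set (PV k), (∀ u, u ≠ v → (u ∈ A' ↔ u ∈ A)) ∧ (v ∈ A' ↔ v ∉ A) := by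
    by_cases h : v ∈ A
    · exact ⟨A \ {v}, fun u hu => by simp [hu], by simp [h]⟩
    · exact ⟨insert v A, fun u hu => by simp [hu], by simp [h]⟩
  obtain ⟨A', hA', hv⟩ := hex
  refine ⟨A', ?_, ?_, ?_⟩
  · ext u
    simp only [Set.mem_inter_iff, Set.mem_range]
    constructor
    · rintro ⟨hu, j, rfl⟩
      exact ⟨(hA' _ (sym_ne_node k j i s)).mp hu, j, rfl⟩
    · rintro ⟨hu, j, rfl⟩
      exact ⟨(hA' _ (sym_ne_node k j i s)).mpr hu, j, rfl⟩
  · -- width does not increase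
    apply partWidth_flip_le (PG k) A A' v hA' hv
    have hvadj1 : (PG k).Adj v (bowtieA1 k i) := by
      cases s
      · exact (adj_A1B k i).symm
      · exact (adj_A1C k i).symm
    have hvadj2 : (PG k).Adj v (bowtieA2 k i) := by
      cases s
      · exact (adj_A2B k i).symm
      · exact (adj_A2C k i).symm
    obtain ⟨x, y, hxy⟩ :
        ∃ x y : PV k, ∀ w, (PG k).Adj v w →
          w = bowtieA1 k i ∨ w = bowtieA2 k i ∨ w = x ∨ w = y := by
      cases s
      · exact nbr_bowtieB k i
      · exact nbr_bowtieC k i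
    have hnbr_sub : {u | (PG k).Adj v u} ⊆ {bowtieA1 k i, bowtieA2 k i, x, y} := by
      intro u hu
      rcases hxy u hu with h | h | h | h <;> simp [h]
    have hnbr_card : ({u | (PG k).Adj v u}).ncard ≤ 4 := by
      refine le_trans (Set.ncard_le_ncard hnbr_sub (Set.toFinite _)) ?_
      refine le_trans (Set.ncard_insert_le _ _) ?_
      have h3 : ({bowtieA2 k i, x, y} : Set (PV k)).ncard ≤ 3 := by
        refine le_trans (Set.ncard_insert_le _ _) ?_
        have h2 : ({x, y} : Set (PV k)).ncard ≤ 2 := by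
          refine le_trans (Set.ncard_insert_le _ _) ?_
          simp [Set.ncard_singleton]
        omega
      omega
    have hpair_sub : ({bowtieA1 k i, bowtieA2 k i} : Set (PV k)) ⊆ oppSet (PG k) A v := by
      obtain ⟨h12, hop⟩ := hw
      intro u hu
      rcases hu with rfl | hu
      · exact ⟨hvadj1, fun h => hop (by tauto)⟩
      · rcases hu with rfl
        exact ⟨hvadj2, fun h => hop (by tauto)⟩
    have hd2 : 2 ≤ (oppSet (PG k) A v).ncard := by
      have := Set.ncard_le_ncard hpair_sub (Set.toFinite _)
      rwa [Set.ncard_pair (A1_ne_A2 k i)] at this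
    have hflip := oppSet_flip (PG k) A A' v hA' hv
    have hsub : oppSet (PG k) A v ⊆ {u | (PG k).Adj v u} := fun u hu => hu.1
    rw [hflip, Set.ncard_diff hsub (Set.toFinite _)]
    omega
  · -- mu decreases
    have hset : {p : Fin (2 ^ k) × Bool | Wrong k A' p.1 p.2} =
        {p : Fin (2 ^ k) × Bool | Wrong k A p.1 p.2} \ {(i, s)} := by
      ext ⟨j, t⟩
      simp only [Set.mem_setOf_eq, Set.mem_diff, Set.mem_singleton_iff, Prod.mk.injEq,
        not_and_or]
      by_cases hq : j = i ∧ t = s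
      · obtain ⟨rfl, rfl⟩ := hq
        refine iff_of_false (fun hwq => ?_) (fun h => by tauto)
        obtain ⟨h12, hop⟩ := hwq
        obtain ⟨h12', hop'⟩ := hw
        have e1 : bowtieA1 k j ∈ A' ↔ bowtieA1 k j ∈ A :=
          hA' _ (sym_ne_node k _ j t)
        have e2 : cond t (bowtieC k j) (bowtieB k j) ∈ A' ↔
            cond t (bowtieC k j) (bowtieB k j) ∉ A := hv
        tauto
      · rw [not_and_or] at hq
        have e1 : bowtieA1 k j ∈ A' ↔ bowtieA1 k j ∈ A :=
          hA' _ (sym_ne_node k _ i s)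
        have e2 : bowtieA2 k j ∈ A' ↔ bowtieA2 k j ∈ A :=
          hA' _ (sym_ne_node k _ i s)
        have e3 : cond t (bowtieC k j) (bowtieB k j) ∈ A' ↔
            cond t (bowtieC k j) (bowtieB k j) ∈ A :=
          hA' _ (node_ne_node k hq)
        simp only [Wrong, e1, e2, e3]
        tauto
    have hmem : (i, s) ∈ {p : Fin (2 ^ k) × Bool | Wrong k A p.1 p.2} := hw
    rw [mu, mu, hset]
    exact Set.ncard_diff_singleton_lt_of_mem hmem (Set.toFinite _)

lemma exists_base (k m : ℕ) (hm : m ≤ 2 ^ k) :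
    ∃ B : Set (PV k), (B ∩ Set.range (sym k)).ncard = m := by
  have hle : m ≤ 2 ^ (k + 1) := le_trans hm (Nat.pow_le_pow_right (by norm_num) (by omega))
  refine ⟨Set.range (fun t : Fin m => sym k (Fin.castLE hle t)), ?_⟩
  have hsub : Set.range (fun t : Fin m => sym k (Fin.castLE hle t)) ⊆ Set.range (sym k) := by
    rintro u ⟨t, rfl⟩; exact ⟨_, rfl⟩
  rw [Set.inter_eq_self_of_subset_left hsub]
  have hinj : Function.Injective (fun t : Fin m => sym k (Fin.castLE hle t)) :=
    fun a b h => Fin.castLE_injective hle (sym_injective k h)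
  rw [← Set.image_univ, Set.ncard_image_of_injective _ hinj, Set.ncard_univ]
  simp

theorem exists_min_m_partition_no_crossing_bowtie' (k m : ℕ) (hm : m ≤ 2 ^ k) :
    ∃ A : Set (PV k),
      (A ∩ Set.range (sym k)).ncard = m ∧
      (∀ B : Set (PV k), (B ∩ Set.range (sym k)).ncard = m →
        partWidth (PG k) A ≤ partWidth (PG k) B) ∧
      (∀ i : Fin (2 ^ k), SplitBowtie k i A ∨ ContainedBowtie k i A) := by
  classical
  set C : Set (Set (PV k)) := {B | (B ∩ Set.range (sym k)).ncard = m} with hC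
  have hCne : C.Nonempty := exists_base k m hm
  set w0 : ℕ := sInf (partWidth (PG k) '' C) with hw0
  have hw0mem : w0 ∈ partWidth (PG k) '' C := Nat.sInf_mem (hCne.image _)
  set C' : Set (Set (PV k)) := {B | B ∈ C ∧ partWidth (PG k) B = w0} with hC'
  have hC'ne : C'.Nonempty := by
    obtain ⟨B, hB, hBw⟩ := hw0mem
    exact ⟨B, hB, hBw⟩
  have hmu0mem : sInf (mu k '' C') ∈ mu k '' C' := Nat.sInf_mem (hC'ne.image _)
  obtain ⟨A, hAC', hAmu⟩ := hmu0mem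
  obtain ⟨hAC, hAw⟩ := hAC'
  have hmin : ∀ B : Set (PV k), (B ∩ Set.range (sym k)).ncard = m →
      partWidth (PG k) A ≤ partWidth (PG k) B := by
    intro B hB
    rw [hAw]
    exact Nat.sInf_le ⟨B, hB, rfl⟩
  have hNW : ∀ (i : Fin (2 ^ k)) (s : Bool), ¬Wrong k A i s := by
    intro i s hw
    obtain ⟨A', hint, hwle, hmu⟩ := flip_improve k A i s hw
    have hA'C : A' ∈ C := by
      show (A' ∩ Set.range (sym k)).ncard = m
      rw [hint]; exact hAC
    have hA'w : partWidth (PG k) A' = w0 := by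
      have h1 : w0 ≤ partWidth (PG k) A' := Nat.sInf_le ⟨A', hA'C, rfl⟩
      have h2 : partWidth (PG k) A' ≤ w0 := hAw ▸ hwle
      omega
    have : sInf (mu k '' C') ≤ mu k A' := Nat.sInf_le ⟨A', ⟨hA'C, hA'w⟩, rfl⟩
    omega
  refine ⟨A, hAC, hmin, fun i => ?_⟩
  by_cases h12 : bowtieA1 k i ∈ A ↔ bowtieA2 k i ∈ A
  · right
    have hB := hNW i false
    have hC := hNW i true
    unfold Wrong at hB hC
    simp only [cond] at hB hC
    unfold ContainedBowtie
    tauto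
  · left
    unfold SplitBowtie
    tauto

/-- For every `n ≥ 1` (written `n = k + 1`) and every `m` with
`0 ≤ m ≤ 2^{n−1} = 2^k`, there exists a minimum-width `m`-partition of the symbol nodes
of the `n`-polar decoding graph `P_n = PG k` in which every bowtie is either split or
contained (i.e. no bowtie is crossing). -/
theorem exists_min_m_partition_no_crossing_bowtie (k m : ℕ) (hm : m ≤ 2 ^ k) :
    ∃ A : Set (PV k),
      (A ∩ Set.range (sym k)).ncard = m ∧
      (∀ B : Set (PV k), (B ∩ Set.range (sym k)).ncard = m →
        partWidth (PG k) A ≤ partWidth (PG k) B) ∧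
      (∀ i : Fin (2 ^ k), SplitBowtie k i A ∨ ContainedBowtie k i A) := by
  exact exists_min_m_partition_no_crossing_bowtie' k m hm
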